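/- Let D ⊂ ℝ^N be a bounded measurable set (N ≥ 1), let j be an integer with 1 ≤ j ≤ N, and let K : D × D → ℂ be measurable with |K(x,y)| ≤ C₀ |x − y|^{j−N} for all x ≠ y in D. Let 1 ≤ p ≤ s ≤ ∞ satisfy 1/s > 1/p − j/N. Then the operator Ef(y) = ∫_D K(x,y) f(x) dx is bounded from L^p(D) to L^s(D): there is a constant C (depending only on C₀, D, N, j, p, s) such that ‖Ef‖_{L^s(D)} ≤ C ‖f‖_{L^p(D)} for all f ∈ L^p(D). -/

import Mathlib

open MeasureTheory ENNReal

open Metric in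

/-- Finiteness of `∫ ‖z‖^a` over a closed ball, for `a ∈ (-N, 0]`. -/
lemma finite_lintegral_rpow_norm' (N : ℕ) (hN : 1 ≤ N) (ρ a : ℝ) (hρ : 0 < ρ)
    (ha : -(N : ℝ) < a) (ha0 : a ≤ 0) :
    ∫⁻ z : EuclideanSpace ℝ (Fin N) in closedBall 0 ρ, ENNReal.ofReal (‖z‖ ^ a) < ∞ := by
  haveI : Nonempty (Fin N) := ⟨⟨0, hN⟩⟩
  set S : ℕ → Set (EuclideanSpace ℝ (Fin N)) :=
    fun n => closedBall 0 (ρ * (2⁻¹ : ℝ) ^ n) \ closedBall 0 (ρ * (2⁻¹ : ℝ) ^ (n + 1)) with hS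
  have hcover : closedBall (0 : EuclideanSpace ℝ (Fin N)) ρ ⊆ {0} ∪ ⋃ n, S n := by
    intro z hz
    rcases eq_or_ne z 0 with rfl | hz0
    · exact Or.inl rfl
    right
    have hz0' : 0 < ‖z‖ := norm_pos_iff.mpr hz0
    have hex : ∃ m : ℕ, ρ * (2⁻¹ : ℝ) ^ m < ‖z‖ := by
      obtain ⟨m, hm⟩ := exists_pow_lt_of_lt_one (div_pos hz0' hρ) (by norm_num : (2⁻¹:ℝ) < 1)
      exact ⟨m, by rw [mul_comm]; exact (lt_div_iff₀ hρ).mp hm⟩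
    classical
    set m₀ := Nat.find hex with hm₀
    have hlt : ρ * (2⁻¹ : ℝ) ^ m₀ < ‖z‖ := Nat.find_spec hex
    have hm₀pos : m₀ ≠ 0 := by
      intro h
      rw [h] at hlt
      simp only [pow_zero, mul_one] at hlt
      exact absurd (mem_closedBall_zero_iff.mp hz) (not_le.mpr hlt)
    refine Set.mem_iUnion.mpr ⟨m₀ - 1, ?_, ?_⟩
    · have := Nat.find_min hex (m := m₀ - 1) (Nat.sub_lt (Nat.pos_of_ne_zero hm₀pos) one_pos)
      exact mem_closedBall_zero_iff.mpr (not_lt.mp this)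
    · intro hmem
      have : ρ * (2⁻¹ : ℝ) ^ (m₀ - 1 + 1) < ‖z‖ := by
        rw [Nat.sub_add_cancel (Nat.one_le_iff_ne_zero.mpr hm₀pos)]; exact hlt
      exact absurd (mem_closedBall_zero_iff.mp hmem) (not_le.mpr this)
  calc ∫⁻ z : EuclideanSpace ℝ (Fin N) in closedBall 0 ρ, ENNReal.ofReal (‖z‖ ^ a)
      ≤ ∫⁻ z : EuclideanSpace ℝ (Fin N) in {0} ∪ ⋃ n, S n, ENNReal.ofReal (‖z‖ ^ a) :=
        lintegral_mono_set hcover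
    _ ≤ (∫⁻ z : EuclideanSpace ℝ (Fin N) in {0}, ENNReal.ofReal (‖z‖ ^ a))
        + ∫⁻ z : EuclideanSpace ℝ (Fin N) in ⋃ n, S n, ENNReal.ofReal (‖z‖ ^ a) :=
        lintegral_union_le _ _ _
    _ < ∞ := by
        rw [ENNReal.add_lt_top]
        constructor
        · rw [Measure.restrict_eq_zero.mpr (measure_singleton 0)]
          simp
        · have h2 : (0:ℝ) < 2⁻¹ := by norm_num
          set t : ℝ := 2⁻¹ with ht
          set B : ℝ≥0∞ := volume (ball (0 : EuclideanSpace ℝ (Fin N)) 1) with hB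
          have hBfin : B < ∞ := measure_ball_lt_top
          have key : ∀ n : ℕ, (ρ * t ^ (n+1)) ^ a * (ρ * t ^ n) ^ (N:ℕ)
              = (ρ ^ a * t ^ a * ρ ^ (N:ℕ)) * ((t ^ (a + (N:ℝ))) ^ n) := by
            intro n
            have hA : (ρ * t ^ (n+1)) ^ a = ρ ^ a * (t ^ a) ^ (n+1) := by
              rw [Real.mul_rpow hρ.le (by positivity), ← Real.rpow_natCast t (n+1),
                ← Real.rpow_mul h2.le, mul_comm ((n+1 : ℕ):ℝ) a, Real.rpow_mul h2.le,
                Real.rpow_natCast]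
            have hBpow : (ρ * t ^ n) ^ (N:ℕ) = ρ ^ (N:ℕ) * (t ^ (N:ℕ)) ^ n := by
              rw [mul_pow, ← pow_mul, mul_comm n N, pow_mul]
            rw [hA, hBpow, Real.rpow_add h2 a (N:ℝ), Real.rpow_natCast t N]
            ring
          have hterm : ∀ n : ℕ, (∫⁻ z : EuclideanSpace ℝ (Fin N) in S n, ENNReal.ofReal (‖z‖ ^ a))
              ≤ (ENNReal.ofReal (ρ ^ a * t ^ a * ρ ^ (N:ℕ)) * B) * (ENNReal.ofReal (t ^ (a + (N:ℝ)))) ^ n := by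
            intro n
            have hSmeas : MeasurableSet (S n) :=
              (measurableSet_closedBall).diff measurableSet_closedBall
            have hrpos : (0:ℝ) < ρ * t ^ (n+1) := by positivity
            have hbound : ∀ z ∈ S n, ENNReal.ofReal (‖z‖ ^ a)
                ≤ ENNReal.ofReal ((ρ * t ^ (n+1)) ^ a) := by
              intro z hz
              apply ENNReal.ofReal_le_ofReal
              have h1 : ρ * t ^ (n+1) ≤ ‖z‖ := by
                by_contra hcon
                exact hz.2 (mem_closedBall_zero_iff.mpr (le_of_lt (not_le.mp hcon)))
              exact Real.rpow_le_rpow_of_nonpos hrpos h1 ha0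
            calc (∫⁻ z : EuclideanSpace ℝ (Fin N) in S n, ENNReal.ofReal (‖z‖ ^ a))
                ≤ ∫⁻ _z : EuclideanSpace ℝ (Fin N) in S n,
                    ENNReal.ofReal ((ρ * t ^ (n+1)) ^ a) := setLIntegral_mono' hSmeas hbound
              _ = ENNReal.ofReal ((ρ * t ^ (n+1)) ^ a) * volume (S n) := setLIntegral_const _ _
              _ ≤ ENNReal.ofReal ((ρ * t ^ (n+1)) ^ a)
                    * volume (closedBall (0 : EuclideanSpace ℝ (Fin N)) (ρ * t ^ n)) := by
                  gcongr
                  exact Set.diff_subset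
              _ = ENNReal.ofReal ((ρ * t ^ (n+1)) ^ a)
                    * (ENNReal.ofReal ((ρ * t ^ n) ^ (N:ℕ)) * B) := by
                  rw [Measure.addHaar_closedBall _ _ (by positivity : (0:ℝ) ≤ ρ * t ^ n)]
                  rw [finrank_euclideanSpace_fin]
              _ = ENNReal.ofReal ((ρ * t ^ (n+1)) ^ a * (ρ * t ^ n) ^ (N:ℕ)) * B := by
                  rw [ENNReal.ofReal_mul (by positivity)]; ring
              _ = (ENNReal.ofReal (ρ ^ a * t ^ a * ρ ^ (N:ℕ)) * B) * (ENNReal.ofReal (t ^ (a + (N:ℝ)))) ^ n := by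
                  rw [key n, ENNReal.ofReal_mul (by positivity), ← ENNReal.ofReal_pow (by positivity)]
                  ring
          have hq : ENNReal.ofReal (t ^ (a + (N:ℝ))) < 1 := by
            rw [← ENNReal.ofReal_one]
            apply (ENNReal.ofReal_lt_ofReal_iff one_pos).mpr
            apply Real.rpow_lt_one h2.le (by norm_num) (by linarith)
          calc (∫⁻ z : EuclideanSpace ℝ (Fin N) in ⋃ n, S n, ENNReal.ofReal (‖z‖ ^ a))
              ≤ ∑' n, ∫⁻ z : EuclideanSpace ℝ (Fin N) in S n, ENNReal.ofReal (‖z‖ ^ a) :=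
                lintegral_iUnion_le _ _
            _ ≤ ∑' n, (ENNReal.ofReal (ρ ^ a * t ^ a * ρ ^ (N:ℕ)) * B) * (ENNReal.ofReal (t ^ (a + (N:ℝ)))) ^ n :=
                ENNReal.tsum_le_tsum hterm
            _ = (ENNReal.ofReal (ρ ^ a * t ^ a * ρ ^ (N:ℕ)) * B) * (1 - ENNReal.ofReal (t ^ (a + (N:ℝ))))⁻¹ := by
                rw [ENNReal.tsum_mul_left, ENNReal.tsum_geometric]
            _ < ∞ := by
                apply ENNReal.mul_lt_top
                · exact ENNReal.mul_lt_top ENNReal.ofReal_lt_top hBfin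
                · rw [lt_top_iff_ne_top, Ne, ENNReal.inv_eq_top]
                  intro h
                  rw [tsub_eq_zero_iff_le] at h
                  exact absurd h (not_le.mpr hq)

open Metric in
lemma kernel_lintegral_bound' (N : ℕ) (hN : 1 ≤ N) (D : Set (EuclideanSpace ℝ (Fin N)))
    (hDbdd : Bornology.IsBounded D) (c a : ℝ) (hc : 0 ≤ c) (ha : -(N : ℝ) < a) (ha0 : a ≤ 0) :
    ∃ A : ℝ≥0∞, A ≠ ∞ ∧ ∀ y ∈ D,
      (∫⁻ x in D, ENNReal.ofReal (c * ‖x - y‖ ^ a) ∂volume) ≤ A := by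
  obtain ⟨ρ₀, hρ₀⟩ := hDbdd.subset_closedBall 0
  set ρ : ℝ := max ρ₀ 1 with hρdef
  have hρpos : (0:ℝ) < ρ := lt_of_lt_of_le one_pos (le_max_right _ _)
  have hρD : D ⊆ closedBall 0 ρ := hρ₀.trans (closedBall_subset_closedBall (le_max_left _ _))
  set G : EuclideanSpace ℝ (Fin N) → ℝ≥0∞ :=
    fun z => ENNReal.ofReal (‖z‖ ^ a) with hG
  set F : EuclideanSpace ℝ (Fin N) → ℝ≥0∞ :=
    (closedBall (0 : EuclideanSpace ℝ (Fin N)) (2*ρ)).indicator G with hF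
  refine ⟨ENNReal.ofReal c * ∫⁻ z in closedBall 0 (2*ρ), G z, ?_, ?_⟩
  · exact (ENNReal.mul_lt_top ENNReal.ofReal_lt_top
      (finite_lintegral_rpow_norm' N hN (2*ρ) a (by linarith) ha ha0)).ne
  intro y hy
  have hyρ : ‖y‖ ≤ ρ := mem_closedBall_zero_iff.mp (hρD hy)
  have hDsub : D ⊆ closedBall y (2*ρ) := by
    intro x hx
    have hxρ : ‖x‖ ≤ ρ := mem_closedBall_zero_iff.mp (hρD hx)
    rw [mem_closedBall_iff_norm]
    calc ‖x - y‖ ≤ ‖x‖ + ‖y‖ := norm_sub_le _ _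
      _ ≤ 2*ρ := by linarith
  calc (∫⁻ x in D, ENNReal.ofReal (c * ‖x - y‖ ^ a) ∂volume)
      = ∫⁻ x in D, ENNReal.ofReal c * G (x - y) ∂volume := by
        congr 1; funext x
        rw [hG, ENNReal.ofReal_mul hc]
    _ = ENNReal.ofReal c * ∫⁻ x in D, G (x - y) ∂volume :=
        lintegral_const_mul' _ _ ENNReal.ofReal_ne_top
    _ ≤ ENNReal.ofReal c * ∫⁻ x in closedBall y (2*ρ), G (x - y) ∂volume := by
        gcongr
    _ = ENNReal.ofReal c * ∫⁻ x, F (x - y) ∂volume := by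
        congr 1
        rw [← lintegral_indicator measurableSet_closedBall]
        congr 1; funext x
        by_cases hx : x ∈ closedBall y (2*ρ)
        · rw [Set.indicator_of_mem hx, hF, Set.indicator_of_mem]
          rw [mem_closedBall_zero_iff]
          exact mem_closedBall_iff_norm.mp hx
        · rw [Set.indicator_of_notMem hx, hF, Set.indicator_of_notMem]
          intro hmem
          exact hx (mem_closedBall_iff_norm.mpr (mem_closedBall_zero_iff.mp hmem))
    _ = ENNReal.ofReal c * ∫⁻ z in closedBall 0 (2*ρ), G z := by
        congr 1
        have : (fun x => F (x - y)) = fun x => F (x + (-y)) := by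
          funext x; rw [sub_eq_add_neg]
        rw [this, lintegral_add_right_eq_self F (-y),
          ← lintegral_indicator measurableSet_closedBall]

set_option maxHeartbeats 1000000 in
/-- Let `D ⊂ ℝ^N` be bounded and measurable, `1 ≤ j ≤ N`, and let
`K : D × D → ℂ` be measurable with `|K(x,y)| ≤ C₀ |x − y|^{j−N}` off the diagonal.
If `1 ≤ p ≤ s ≤ ∞` satisfy `1/s > 1/p − j/N`, then `Ef(y) = ∫_D K(x,y) f(x) dx` is
bounded from `L^p(D)` to `L^s(D)`. -/
theorem isotropic_kernel_Lp_to_Ls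
    (N : ℕ) (hN : 1 ≤ N)
    (D : Set (EuclideanSpace ℝ (Fin N))) (hDmeas : MeasurableSet D)
    (hDbdd : Bornology.IsBounded D)
    (j : ℕ) (hj1 : 1 ≤ j) (hjN : j ≤ N)
    (K : EuclideanSpace ℝ (Fin N) → EuclideanSpace ℝ (Fin N) → ℂ)
    (hKmeas : Measurable (Function.uncurry K))
    (C₀ : ℝ)
    (hK : ∀ x ∈ D, ∀ y ∈ D, x ≠ y → ‖K x y‖ ≤ C₀ * ‖x - y‖ ^ ((j : ℝ) - N))
    (p s : ℝ≥0∞) (hp : 1 ≤ p) (hps : p ≤ s)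
    (hexp : (1 / s).toReal > (1 / p).toReal - (j : ℝ) / N) :
    ∃ C : ℝ, 0 < C ∧ ∀ f : EuclideanSpace ℝ (Fin N) → ℂ,
      MemLp f p (volume.restrict D) →
      eLpNorm (fun y => ∫ x in D, K x y * f x ∂volume) s (volume.restrict D)
        ≤ ENNReal.ofReal C * eLpNorm f p (volume.restrict D) := by
  haveI : Nonempty (Fin N) := ⟨⟨0, Nat.lt_of_lt_of_le Nat.zero_lt_one hN⟩⟩
  have hNpos : (0:ℝ) < N := by exact_mod_cast Nat.lt_of_lt_of_le Nat.zero_lt_one hN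
  set a₀ : ℝ := (j : ℝ) - N with ha₀def
  have ha₀neg : a₀ ≤ 0 := by
    have : (j:ℝ) ≤ N := by exact_mod_cast hjN
    simp only [ha₀def]; linarith
  have ha₀gt : -(N:ℝ) < a₀ := by
    have : (1:ℝ) ≤ j := by exact_mod_cast hj1
    simp only [ha₀def]; linarith
  set C₁ : ℝ := max C₀ 0 with hC₁def
  have hC₁ : 0 ≤ C₁ := le_max_right _ _
  set kk : EuclideanSpace ℝ (Fin N) → EuclideanSpace ℝ (Fin N) → ℝ≥0∞ :=
    fun x y => ENNReal.ofReal (C₁ * ‖x - y‖ ^ a₀) with hkkdef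
  have hK₁ : ∀ x ∈ D, ∀ y ∈ D, x ≠ y → (‖K x y‖₊ : ℝ≥0∞) ≤ kk x y := by
    intro x hx y hy hxy
    rw [← ENNReal.ofReal_coe_nnreal, coe_nnnorm]
    apply ENNReal.ofReal_le_ofReal
    refine (hK x hx y hy hxy).trans ?_
    exact mul_le_mul_of_nonneg_right (le_max_left _ _) (Real.rpow_nonneg (norm_nonneg _) _)
  have hkkmeas : ∀ y, Measurable (fun x => kk x y) := by
    intro y
    exact (((measurable_id.sub_const y).norm.pow_const a₀).const_mul C₁).ennreal_ofReal
  by_cases hptop : p = ∞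
  · -- p = s = ∞
    have hstop : s = ∞ := top_le_iff.mp (hptop ▸ hps)
    obtain ⟨A, hAne, hAbd⟩ := kernel_lintegral_bound' N hN D hDbdd C₁ a₀ hC₁ ha₀gt ha₀neg
    refine ⟨A.toReal + 1, by positivity, ?_⟩
    intro f hf
    have hmf := hf.aestronglyMeasurable
    set f₀ := hmf.mk f with hf₀def
    have hff₀ : f =ᵐ[volume.restrict D] f₀ := hmf.ae_eq_mk
    have hEf : (fun y => ∫ x in D, K x y * f x ∂volume)
        = fun y => ∫ x in D, K x y * f₀ x ∂volume := by
      funext y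
      exact integral_congr_ae (hff₀.mono fun x hx => by dsimp only; rw [hx])
    rw [hEf, eLpNorm_congr_ae hff₀, hstop, hptop]
    set g : EuclideanSpace ℝ (Fin N) → ℝ≥0∞ := fun x => (‖f₀ x‖₊ : ℝ≥0∞) with hgdef
    have hM : eLpNorm f₀ ⊤ (volume.restrict D) ≠ ∞ := by
      rw [← eLpNorm_congr_ae hff₀]
      exact hptop ▸ hf.2.ne
    have hgM : ∀ᵐ x ∂(volume.restrict D), g x ≤ eLpNorm f₀ ⊤ (volume.restrict D) := by
      rw [eLpNorm_exponent_top]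
      exact ae_le_eLpNormEssSup
    rw [eLpNorm_exponent_top]
    refine le_trans (essSup_le_of_ae_le (A * eLpNorm f₀ ⊤ (volume.restrict D)) ?_) ?_
    · -- a.e. bound
      filter_upwards [ae_restrict_mem hDmeas] with y hy
      calc (‖∫ x in D, K x y * f₀ x ∂volume‖₊ : ℝ≥0∞)
          ≤ ∫⁻ x in D, (‖K x y * f₀ x‖₊ : ℝ≥0∞) ∂volume :=
            enorm_integral_le_lintegral_enorm _
        _ ≤ ∫⁻ x in D, kk x y * g x ∂volume := by
            apply lintegral_mono_ae
            have h2 : ∀ᵐ x ∂(volume.restrict D), x ≠ y := by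
              rw [ae_iff]
              have he : {x : EuclideanSpace ℝ (Fin N) | ¬ x ≠ y} = {y} := by ext z; simp
              rw [he]
              exact le_antisymm ((Measure.restrict_apply_le _ _).trans_eq (measure_singleton y))
                bot_le
            filter_upwards [ae_restrict_mem hDmeas, h2] with x hxD hxy
            rw [nnnorm_mul, ENNReal.coe_mul]
            exact mul_le_mul_left (hK₁ x hxD y hy hxy) _
        _ ≤ ∫⁻ x in D, kk x y * eLpNorm f₀ ⊤ (volume.restrict D) ∂volume := by
            apply lintegral_mono_ae
            filter_upwards [hgM] with x hx
            exact mul_le_mul_right hx _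
        _ = (∫⁻ x in D, kk x y ∂volume) * eLpNorm f₀ ⊤ (volume.restrict D) :=
            lintegral_mul_const' _ _ hM
        _ ≤ A * eLpNorm f₀ ⊤ (volume.restrict D) := mul_le_mul_left (hAbd y hy) _
    · refine mul_le_mul_left ?_ _
      conv_lhs => rw [← ENNReal.ofReal_toReal hAne]
      exact ENNReal.ofReal_le_ofReal (by linarith [lt_add_one A.toReal])
  · -- p finite
    have hp0 : p ≠ 0 := (zero_lt_one.trans_le hp).ne'
    set q : ℝ := p.toReal with hqdef
    have hq1 : 1 ≤ q := by
      have h := ENNReal.toReal_mono hptop hp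
      rw [hqdef]; simpa using h
    have hq0 : 0 < q := zero_lt_one.trans_le hq1
    set P : ℝ := 1 / q with hPdef
    have hP0 : 0 < P := by positivity
    have hP1 : P ≤ 1 := by rw [hPdef, div_le_one hq0]; exact hq1
    have hPtoReal : (1 / p).toReal = P := by
      rw [one_div, ENNReal.toReal_inv, hPdef, one_div, hqdef]
    set S : ℝ := (1 / s).toReal with hSdef
    have hS0 : 0 ≤ S := ENNReal.toReal_nonneg
    have h1pne : (1 / p) ≠ ∞ := by rw [one_div]; exact ENNReal.inv_ne_top.mpr hp0
    have hSP : S ≤ P := by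
      rw [← hPtoReal, hSdef]
      apply ENNReal.toReal_mono h1pne
      rw [one_div, one_div]
      exact ENNReal.inv_le_inv' hps
    have hexp' : P - (j:ℝ)/N < S := by
      rw [← hPtoReal]; exact hexp
    set R : ℝ := 1 - P + S with hRdef
    have hjN' : (j:ℝ) ≤ N := by exact_mod_cast hjN
    have hjdivN : (j:ℝ)/N ≤ 1 := by rw [div_le_one hNpos]; exact hjN'
    have hR0 : 0 < R := by rw [hRdef]; linarith
    have hRS : S ≤ R := by rw [hRdef]; linarith
    have hR1 : R ≤ 1 := by rw [hRdef]; linarith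
    set r : ℝ := 1 / R with hrdef
    have hr0 : 0 < r := by positivity
    have hrR : r * R = 1 := by rw [hrdef]; field_simp
    have har : -(N:ℝ) < a₀ * r := by
      have hNR : (N:ℝ) - j < N * R := by
        have h1 : 1 - (j:ℝ)/N < R := by rw [hRdef]; linarith
        have := mul_lt_mul_of_pos_left h1 hNpos
        rw [mul_sub, mul_one, mul_div_cancel₀ _ hNpos.ne'] at this
        linarith
      have h1 : ((N:ℝ) - j) * r < N := by
        rw [hrdef, mul_one_div, div_lt_iff₀ hR0]
        nlinarith
      have e : ((j:ℝ) - N) * r = -(((N:ℝ) - j) * r) := by ring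
      rw [ha₀def, e]
      linarith
    have har0 : a₀ * r ≤ 0 := mul_nonpos_of_nonpos_of_nonneg ha₀neg hr0.le
    obtain ⟨A, hAne, hAbd⟩ := kernel_lintegral_bound' N hN D hDbdd (C₁ ^ r) (a₀ * r)
      (Real.rpow_nonneg hC₁ r) har har0
    have hkkpow : ∀ x y : EuclideanSpace ℝ (Fin N),
        kk x y ^ r = ENNReal.ofReal (C₁ ^ r * ‖x - y‖ ^ (a₀ * r)) := by
      intro x y
      rw [hkkdef]
      dsimp only
      rw [ENNReal.ofReal_rpow_of_nonneg (by positivity) hr0.le]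
      congr 1
      rw [Real.mul_rpow hC₁ (Real.rpow_nonneg (norm_nonneg _) _),
        ← Real.rpow_mul (norm_nonneg _)]
    have hARne : A ^ R ≠ ∞ := ENNReal.rpow_ne_top_of_nonneg hR0.le hAne
    refine ⟨(A ^ R).toReal + 1, by positivity, ?_⟩
    have hCge : A ^ R ≤ ENNReal.ofReal ((A ^ R).toReal + 1) := by
      conv_lhs => rw [← ENNReal.ofReal_toReal hARne]
      exact ENNReal.ofReal_le_ofReal (by linarith [lt_add_one (A ^ R).toReal])
    intro f hf
    have hmf := hf.aestronglyMeasurable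
    set f₀ := hmf.mk f with hf₀def
    have hff₀ : f =ᵐ[volume.restrict D] f₀ := hmf.ae_eq_mk
    have hEf : (fun y => ∫ x in D, K x y * f x ∂volume)
        = fun y => ∫ x in D, K x y * f₀ x ∂volume := by
      funext y
      exact integral_congr_ae (hff₀.mono fun x hx => by dsimp only; rw [hx])
    rw [hEf, eLpNorm_congr_ae hff₀]
    set g : EuclideanSpace ℝ (Fin N) → ℝ≥0∞ := fun x => (‖f₀ x‖₊ : ℝ≥0∞) with hgdef
    have hgmeas : Measurable g := hmf.stronglyMeasurable_mk.measurable.enorm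
    set Gq : ℝ≥0∞ := ∫⁻ x in D, g x ^ q ∂volume with hGqdef
    have hLp : eLpNorm f₀ p (volume.restrict D) = Gq ^ P := by
      rw [eLpNorm_eq_lintegral_rpow_enorm_toReal hp0 hptop]; rfl
    have hGqne : Gq ≠ ∞ := by
      intro hcon
      have h1 : eLpNorm f₀ p (volume.restrict D) = ∞ := by
        rw [hLp, hcon]; exact ENNReal.top_rpow_of_pos hP0
      have h2 : eLpNorm f₀ p (volume.restrict D) < ∞ := by
        rw [← eLpNorm_congr_ae hff₀]; exact hf.2
      exact absurd h1 h2.ne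
    have hpt : ∀ᵐ y ∂(volume.restrict D), (‖∫ x in D, K x y * f₀ x ∂volume‖₊ : ℝ≥0∞)
        ≤ ∫⁻ x in D, kk x y * g x ∂volume := by
      filter_upwards [ae_restrict_mem hDmeas] with y hy
      calc (‖∫ x in D, K x y * f₀ x ∂volume‖₊ : ℝ≥0∞)
          ≤ ∫⁻ x in D, (‖K x y * f₀ x‖₊ : ℝ≥0∞) ∂volume :=
            enorm_integral_le_lintegral_enorm _
        _ ≤ ∫⁻ x in D, kk x y * g x ∂volume := by
            apply lintegral_mono_ae
            have h2 : ∀ᵐ x ∂(volume.restrict D), x ≠ y := by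
              rw [ae_iff]
              have he : {x : EuclideanSpace ℝ (Fin N) | ¬ x ≠ y} = {y} := by ext z; simp
              rw [he]
              exact le_antisymm ((Measure.restrict_apply_le _ _).trans_eq (measure_singleton y))
                bot_le
            filter_upwards [ae_restrict_mem hDmeas, h2] with x hxD hxy
            rw [nnnorm_mul, ENNReal.coe_mul]
            exact mul_le_mul_left (hK₁ x hxD y hy hxy) _
    set W : EuclideanSpace ℝ (Fin N) → ℝ≥0∞ :=
      fun y => ∫⁻ x in D, kk x y ^ r * g x ^ q ∂volume with hWdef
    have hHold : ∀ y ∈ D, (∫⁻ x in D, kk x y * g x ∂volume)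
        ≤ W y ^ S * A ^ (R - S) * Gq ^ (P - S) := by
      intro y hy
      have hsplit : ∀ x, kk x y * g x
          = (kk x y ^ r * g x ^ q) ^ S * (kk x y ^ r) ^ (R - S) * (g x ^ q) ^ (P - S) := by
        intro x
        rw [ENNReal.mul_rpow_of_nonneg _ _ hS0, ← ENNReal.rpow_mul, ← ENNReal.rpow_mul,
          ← ENNReal.rpow_mul, ← ENNReal.rpow_mul]
        rw [show ∀ (a b c d : ℝ≥0∞), a * b * c * d = (a * c) * (b * d) from
          fun a b c d => by ring]
        rw [← ENNReal.rpow_add_of_nonneg _ _ (mul_nonneg hr0.le hS0)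
            (mul_nonneg hr0.le (by linarith)),
          ← ENNReal.rpow_add_of_nonneg _ _ (mul_nonneg hq0.le hS0)
            (mul_nonneg hq0.le (by linarith))]
        rw [show r * S + r * (R - S) = r * R from by ring, hrR,
          show q * S + q * (P - S) = q * (1/q) from by rw [hPdef]; ring,
          mul_one_div_cancel hq0.ne']
        rw [ENNReal.rpow_one, ENNReal.rpow_one]
      have hfmeas : ∀ i : Fin 3,
          AEMeasurable (![fun x => kk x y ^ r * g x ^ q, fun x => kk x y ^ r,
            fun x => g x ^ q] i) (volume.restrict D) := by
        intro i
        fin_cases i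
        · exact (((hkkmeas y).pow_const r).mul (hgmeas.pow_const q)).aemeasurable
        · exact ((hkkmeas y).pow_const r).aemeasurable
        · exact (hgmeas.pow_const q).aemeasurable
      have H := ENNReal.lintegral_prod_norm_pow_le (μ := volume.restrict D) Finset.univ
        (f := ![fun x => kk x y ^ r * g x ^ q, fun x => kk x y ^ r, fun x => g x ^ q])
        (fun i _ => hfmeas i) (p := ![S, R - S, P - S])
        (by simp only [Fin.sum_univ_three, Matrix.cons_val_zero, Matrix.cons_val_one,
              Matrix.head_cons, Matrix.cons_val_two, Matrix.tail_cons]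
            rw [hRdef]; ring)
        (by intro i _
            fin_cases i
            · simpa using hS0
            · simpa using sub_nonneg.mpr hRS
            · simpa using sub_nonneg.mpr hSP)
      simp only [Fin.prod_univ_three, Matrix.cons_val_zero, Matrix.cons_val_one,
        Matrix.head_cons, Matrix.cons_val_two, Matrix.tail_cons] at H
      calc (∫⁻ x in D, kk x y * g x ∂volume)
          = ∫⁻ x in D, (kk x y ^ r * g x ^ q) ^ S * (kk x y ^ r) ^ (R - S)
              * (g x ^ q) ^ (P - S) ∂volume := lintegral_congr hsplit
        _ ≤ (∫⁻ x in D, kk x y ^ r * g x ^ q ∂volume) ^ S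
            * (∫⁻ x in D, kk x y ^ r ∂volume) ^ (R - S)
            * (∫⁻ x in D, g x ^ q ∂volume) ^ (P - S) := H
        _ ≤ W y ^ S * A ^ (R - S) * Gq ^ (P - S) := by
            refine mul_le_mul' (mul_le_mul' le_rfl ?_) le_rfl
            refine ENNReal.rpow_le_rpow ?_ (by linarith)
            calc (∫⁻ x in D, kk x y ^ r ∂volume)
                = ∫⁻ x in D, ENNReal.ofReal (C₁ ^ r * ‖x - y‖ ^ (a₀ * r)) ∂volume :=
                  lintegral_congr fun x => hkkpow x y
              _ ≤ A := hAbd y hy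
    by_cases hstop : s = ∞
    · rw [hstop, eLpNorm_exponent_top]
      have hSzero : S = 0 := by rw [hSdef, hstop]; simp
      refine le_trans (essSup_le_of_ae_le (A ^ R * Gq ^ P) ?_) ?_
      · filter_upwards [hpt, ae_restrict_mem hDmeas] with y hy hyD
        refine hy.trans ?_
        have h := hHold y hyD
        rw [hSzero] at h
        simpa only [ENNReal.rpow_zero, one_mul, sub_zero] using h
      · rw [hLp]; exact mul_le_mul_left hCge _
    · have hs0 : s ≠ 0 := (zero_lt_one.trans_le (hp.trans hps)).ne'
      set σ : ℝ := s.toReal with hσdef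
      have hσ0 : 0 < σ := ENNReal.toReal_pos hs0 hstop
      have hSσ : S = σ⁻¹ := by rw [hSdef, one_div, ENNReal.toReal_inv, hσdef]
      have hS0' : 0 < S := by rw [hSσ]; positivity
      have hσS : σ * S = 1 := by rw [hSσ]; field_simp
      have hSσ1 : S * σ = 1 := by rw [mul_comm]; exact hσS
      set c₂ : ℝ≥0∞ := (A ^ (R - S) * Gq ^ (P - S)) ^ σ with hc₂def
      have hc₂ne : c₂ ≠ ∞ := by
        rw [hc₂def]
        apply ENNReal.rpow_ne_top_of_nonneg hσ0.le
        exact ENNReal.mul_ne_top (ENNReal.rpow_ne_top_of_nonneg (by linarith) hAne)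
          (ENNReal.rpow_ne_top_of_nonneg (by linarith) hGqne)
      have hgq : ∀ x, g x ^ q ≠ ∞ :=
        fun x => ENNReal.rpow_ne_top_of_nonneg hq0.le ENNReal.coe_ne_top
      have hmeas_swap : AEMeasurable
          (Function.uncurry fun (y x : EuclideanSpace ℝ (Fin N)) => kk x y ^ r * g x ^ q)
          ((volume.restrict D).prod (volume.restrict D)) := by
        apply Measurable.aemeasurable
        apply Measurable.mul
        · exact ((((measurable_snd.sub measurable_fst).norm.pow_const a₀).const_mul
            C₁).ennreal_ofReal).pow_const r
        · exact (hgmeas.comp measurable_snd).pow_const q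
      calc eLpNorm (fun y => ∫ x in D, K x y * f₀ x ∂volume) s (volume.restrict D)
          = (∫⁻ y in D, (‖∫ x in D, K x y * f₀ x ∂volume‖₊ : ℝ≥0∞) ^ σ ∂volume) ^ S := by
            rw [eLpNorm_eq_lintegral_rpow_enorm_toReal hs0 hstop, one_div, ← hSσ]; rfl
        _ ≤ (∫⁻ y in D, W y * c₂ ∂volume) ^ S := by
            apply ENNReal.rpow_le_rpow _ hS0
            apply lintegral_mono_ae
            filter_upwards [hpt, ae_restrict_mem hDmeas] with y hy hyD
            calc (‖∫ x in D, K x y * f₀ x ∂volume‖₊ : ℝ≥0∞) ^ σ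
                ≤ (∫⁻ x in D, kk x y * g x ∂volume) ^ σ := ENNReal.rpow_le_rpow hy hσ0.le
              _ ≤ (W y ^ S * A ^ (R - S) * Gq ^ (P - S)) ^ σ :=
                  ENNReal.rpow_le_rpow (hHold y hyD) hσ0.le
              _ = W y * c₂ := by
                  rw [mul_assoc, ENNReal.mul_rpow_of_nonneg _ _ hσ0.le, ← ENNReal.rpow_mul,
                    hSσ1, ENNReal.rpow_one, hc₂def]
        _ = (c₂ * ∫⁻ y in D, W y ∂volume) ^ S := by
            rw [lintegral_mul_const' c₂ _ hc₂ne, mul_comm]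
        _ ≤ (c₂ * (A * Gq)) ^ S := by
            apply ENNReal.rpow_le_rpow _ hS0
            apply mul_le_mul_right
            calc ∫⁻ y in D, W y ∂volume
                = ∫⁻ x in D, (∫⁻ y in D, kk x y ^ r ∂volume) * g x ^ q ∂volume := by
                  rw [hWdef]
                  rw [lintegral_lintegral_swap hmeas_swap]
                  exact lintegral_congr fun x => lintegral_mul_const' _ _ (hgq x)
              _ ≤ ∫⁻ x in D, A * g x ^ q ∂volume := by
                  apply lintegral_mono_ae
                  filter_upwards [ae_restrict_mem hDmeas] with x hxD
                  apply mul_le_mul_left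
                  calc ∫⁻ y in D, kk x y ^ r ∂volume
                      = ∫⁻ y in D, ENNReal.ofReal (C₁ ^ r * ‖y - x‖ ^ (a₀ * r)) ∂volume := by
                        apply lintegral_congr
                        intro y
                        rw [hkkpow x y, norm_sub_rev]
                    _ ≤ A := hAbd x hxD
              _ = A * Gq := lintegral_const_mul' A _ hAne
        _ = A ^ R * Gq ^ P := by
            have e1 : c₂ ^ S = A ^ (R - S) * Gq ^ (P - S) := by
              rw [hc₂def, ← ENNReal.rpow_mul, hσS, ENNReal.rpow_one]
            rw [ENNReal.mul_rpow_of_nonneg _ _ hS0, e1,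
              ENNReal.mul_rpow_of_nonneg _ _ hS0, mul_mul_mul_comm,
              ← ENNReal.rpow_add_of_nonneg _ _ (by linarith) hS0,
              ← ENNReal.rpow_add_of_nonneg _ _ (by linarith) hS0]
            rw [show R - S + S = R from by ring, show P - S + S = P from by ring]
        _ ≤ ENNReal.ofReal ((A ^ R).toReal + 1) * eLpNorm f₀ p (volume.restrict D) := by
            rw [hLp]; exact mul_le_mul_left hCge _
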